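/- For every c > 0, writing A = A(c) and ȳ = ȳ(A(c)), one has A θ² (e^{θ ȳ} + e^{−θ ȳ}) − 2 k₂ > 0; equivalently, ȳ is a strict local minimum point of the function y ↦ A e^{θ y} + A e^{−θ y} − k₂ y². -/

import Mathlib

/-- `h_A(y) = A θ e^{θ y} − A θ e^{−θ y} − 2 k₂ y`. -/
noncomputable def hFun (θ k₂ A y : ℝ) : ℝ :=
  A * θ * Real.exp (θ * y) - A * θ * Real.exp (-(θ * y)) - 2 * k₂ * y

/-- `g(A) = −A e^{θ ȳ(A)} − A e^{−θ ȳ(A)} + k₂ ȳ(A)² + 2A`. -/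
noncomputable def gFun (θ k₂ : ℝ) (ybar : ℝ → ℝ) (A : ℝ) : ℝ :=
  -A * Real.exp (θ * ybar A) - A * Real.exp (-(θ * ybar A)) + k₂ * (ybar A) ^ 2 + 2 * A

/-- `sinh x < x cosh x` for `x > 0`, in `exp` form. -/
lemma aux_sinh_lt {x : ℝ} (hx : 0 < x) :
    Real.exp x - Real.exp (-x) < x * (Real.exp x + Real.exp (-x)) := by
  set F : ℝ → ℝ := fun t => t * Real.cosh t - Real.sinh t with hFdef
  have hF : ∀ t : ℝ, HasDerivAt F (t * Real.sinh t) t := by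
    intro t
    have h := ((hasDerivAt_id t).mul (Real.hasDerivAt_cosh t)).sub (Real.hasDerivAt_sinh t)
    refine h.congr_deriv ?_
    simp only [id_eq, one_mul]; ring
  have hmono : StrictMonoOn F (Set.Ici 0) := by
    refine strictMonoOn_of_deriv_pos (convex_Ici 0) ?_ ?_
    · exact ((continuous_id.mul Real.continuous_cosh).sub Real.continuous_sinh).continuousOn
    · intro t ht
      rw [interior_Ici, Set.mem_Ioi] at ht
      rw [(hF t).deriv]
      exact mul_pos ht (Real.sinh_pos_iff.mpr ht)
  have h0 : F 0 < F x := hmono (Set.self_mem_Ici) (le_of_lt hx) hx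
  have hF0 : F 0 = 0 := by simp [hFdef]
  have : 0 < x * Real.cosh x - Real.sinh x := by rw [← hF0]; exact h0
  rw [Real.cosh_eq, Real.sinh_eq] at this
  nlinarith [this]

/-- Main auxiliary lemma: everything with `A`, `ȳ` fixed. -/
lemma aux_main (θ k₂ A yb : ℝ) (hθ : 0 < θ) (hk : 0 < k₂) (hA : 0 < A)
    (hyb : 0 < yb) (hzero : hFun θ k₂ A yb = 0) :
    0 < A * θ ^ 2 * (Real.exp (θ * yb) + Real.exp (-(θ * yb))) - 2 * k₂ ∧
      (∀ᶠ y in nhdsWithin yb {yb}ᶜ,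
        A * Real.exp (θ * yb) + A * Real.exp (-(θ * yb)) - k₂ * yb ^ 2 <
          A * Real.exp (θ * y) + A * Real.exp (-(θ * y)) - k₂ * y ^ 2) := by
  have hE : Real.exp (-(θ * yb)) = Real.exp (-(θ * yb)) := rfl
  have hx : 0 < θ * yb := mul_pos hθ hyb
  have key := aux_sinh_lt hx
  rw [hFun] at hzero
  -- Part 1
  have hD : 0 < A * θ ^ 2 * (Real.exp (θ * yb) + Real.exp (-(θ * yb))) - 2 * k₂ := by
    have h2 : 2 * k₂ * yb < A * θ ^ 2 * yb *
        (Real.exp (θ * yb) + Real.exp (-(θ * yb))) := by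
      nlinarith [mul_lt_mul_of_pos_left key (mul_pos hA hθ)]
    nlinarith [h2, hyb]
  refine ⟨hD, ?_⟩
  -- Part 2: strict local minimum
  set f : ℝ → ℝ := fun y => A * Real.exp (θ * y) + A * Real.exp (-(θ * y)) - k₂ * y ^ 2
    with hfdef
  set f1 : ℝ → ℝ := fun y => hFun θ k₂ A y with hf1def
  set f2 : ℝ → ℝ := fun y =>
    A * θ ^ 2 * Real.exp (θ * y) + A * θ ^ 2 * Real.exp (-(θ * y)) - 2 * k₂ with hf2def
  have hde : ∀ y : ℝ, HasDerivAt (fun t => Real.exp (θ * t)) (Real.exp (θ * y) * θ) y := by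
    intro y
    have h := ((hasDerivAt_id y).const_mul θ).exp
    convert h using 1 <;> simp [id_eq]
  have hde' : ∀ y : ℝ, HasDerivAt (fun t => Real.exp (-(θ * t)))
      (Real.exp (-(θ * y)) * (-θ)) y := by
    intro y
    have h := (((hasDerivAt_id y).const_mul θ).neg).exp
    convert h using 1 <;> simp [id_eq]
  have hdf : ∀ y : ℝ, HasDerivAt f (f1 y) y := by
    intro y
    have h := (((hde y).const_mul A).add ((hde' y).const_mul A)).sub
      ((hasDerivAt_pow 2 y).const_mul k₂)
    refine h.congr_deriv ?_
    simp [hf1def, hFun]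
    ring
  have hdf1 : ∀ y : ℝ, HasDerivAt f1 (f2 y) y := by
    intro y
    have h := ((((hde y).const_mul (A * θ)).sub ((hde' y).const_mul (A * θ))).sub
      ((hasDerivAt_id y).const_mul (2 * k₂)))
    refine h.congr_deriv ?_
    simp [hf2def]
    ring
  have hcf2 : Continuous f2 := by
    rw [hf2def]; fun_prop
  have hcf1 : Continuous f1 := by
    have : Continuous fun y : ℝ =>
        A * θ * Real.exp (θ * y) - A * θ * Real.exp (-(θ * y)) - 2 * k₂ * y := by
      fun_prop
    simpa [hf1def, hFun] using this
  have hcf : Continuous f := by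
    rw [hfdef]; fun_prop
  have hf2yb : 0 < f2 yb := by
    have : f2 yb = A * θ ^ 2 * (Real.exp (θ * yb) + Real.exp (-(θ * yb))) - 2 * k₂ := by
      simp [hf2def]; ring
    rw [this]; exact hD
  -- neighborhood on which f2 > 0
  have hpre : f2 ⁻¹' Set.Ioi 0 ∈ nhds yb :=
    hcf2.continuousAt.preimage_mem_nhds (Ioi_mem_nhds hf2yb)
  obtain ⟨ε, hε, hball⟩ := Metric.mem_nhds_iff.mp hpre
  set a := yb - ε / 2 with ha
  set b := yb + ε / 2 with hb
  have hayb : a < yb := by rw [ha]; linarith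
  have hybb : yb < b := by rw [hb]; linarith
  have hpos : ∀ y ∈ Set.Ioo a b, 0 < f2 y := by
    intro y hy
    apply hball
    rw [Metric.mem_ball, Real.dist_eq, abs_lt]
    constructor <;> [skip; skip] <;>
      · simp only [ha, hb] at hy
        rcases hy with ⟨h1, h2⟩
        linarith
  have hmono1 : StrictMonoOn f1 (Set.Icc a b) := by
    refine strictMonoOn_of_deriv_pos (convex_Icc a b) hcf1.continuousOn ?_
    intro y hy
    rw [interior_Icc] at hy
    rw [(hdf1 y).deriv]
    exact hpos y hy
  have hf1yb : f1 yb = 0 := by simpa [hf1def, hFun] using hzero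
  have hybmem : yb ∈ Set.Icc a b := ⟨hayb.le, hybb.le⟩
  -- f strictly monotone on [yb, b]
  have hmonof : StrictMonoOn f (Set.Icc yb b) := by
    refine strictMonoOn_of_deriv_pos (convex_Icc yb b) hcf.continuousOn ?_
    intro y hy
    rw [interior_Icc] at hy
    rw [(hdf y).deriv]
    have : f1 yb < f1 y :=
      hmono1 hybmem ⟨by linarith [hy.1, hayb], hy.2.le⟩ hy.1
    linarith [hf1yb]
  -- f strictly antitone on [a, yb]
  have hantif : StrictAntiOn f (Set.Icc a yb) := by
    refine strictAntiOn_of_deriv_neg (convex_Icc a yb) hcf.continuousOn ?_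
    intro y hy
    rw [interior_Icc] at hy
    rw [(hdf y).deriv]
    have : f1 y < f1 yb :=
      hmono1 ⟨hy.1.le, by linarith [hy.2, hybb]⟩ hybmem hy.2
    linarith [hf1yb]
  have hIoo : Set.Ioo a b ∈ nhds yb := Ioo_mem_nhds hayb hybb
  filter_upwards [mem_nhdsWithin_of_mem_nhds hIoo, self_mem_nhdsWithin] with y hy hne
  have hne' : y ≠ yb := hne
  rcases lt_or_gt_of_ne hne' with hlt | hgt
  · exact hantif ⟨hy.1.le, hlt.le⟩ ⟨hayb.le, le_refl yb⟩ hlt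
  · exact hmonof ⟨le_refl yb, hybb.le⟩ ⟨hgt.le, hy.2.le⟩ hgt

theorem stmt_17 (θ k₂ : ℝ) (hθ : 0 < θ) (hk : 0 < k₂)
    (ybarA : ℝ → ℝ)
    (hybarA : ∀ A : ℝ, 0 < A → A < k₂ / θ ^ 2 →
      0 < ybarA A ∧ hFun θ k₂ A (ybarA A) = 0)
    (Ac : ℝ → ℝ)
    (hAc : ∀ c : ℝ, 0 < c →
      0 < Ac c ∧ Ac c < k₂ / θ ^ 2 ∧ gFun θ k₂ ybarA (Ac c) = c) :
    ∀ c : ℝ, 0 < c →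
      0 < Ac c * θ ^ 2 *
          (Real.exp (θ * ybarA (Ac c)) + Real.exp (-(θ * ybarA (Ac c)))) - 2 * k₂ ∧
      (∀ᶠ y in nhdsWithin (ybarA (Ac c)) {ybarA (Ac c)}ᶜ,
        Ac c * Real.exp (θ * ybarA (Ac c)) + Ac c * Real.exp (-(θ * ybarA (Ac c))) -
            k₂ * (ybarA (Ac c)) ^ 2 <
          Ac c * Real.exp (θ * y) + Ac c * Real.exp (-(θ * y)) - k₂ * y ^ 2) := by
  intro c hc
  obtain ⟨hA0, hA1, _⟩ := hAc c hc
  obtain ⟨hyb, hzero⟩ := hybarA (Ac c) hA0 hA1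
  exact aux_main θ k₂ (Ac c) (ybarA (Ac c)) hθ hk hA0 hyb hzero
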